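/- Let K : [0, ∞) → [0, ∞) be nonincreasing with K(x) = O(x e^{-x}) as x → ∞, and let M be the measure with K(x) = ∫_x^∞ (1/s) dM(s). Then all moments of M are finite, and 1 - M(x) = O(x² e^{-x}) as x → ∞. -/

import Mathlib

open Set MeasureTheory Filter

lemma aux_summable_6 (m : ℕ) :
    Summable (fun n : ℕ => ((n : ℝ) + 2) ^ m * Real.exp (-1) ^ n) := by
  have hr : ‖Real.exp (-1)‖ < 1 := by
    rw [Real.norm_eq_abs, abs_of_pos (Real.exp_pos _)]
    exact Real.exp_lt_one_iff.mpr (by norm_num)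
  have h := summable_pow_mul_geometric_of_norm_lt_one (R := ℝ) m hr
  have h2 := (summable_nat_add_iff 2).mpr h
  have h3 := h2.mul_left ((Real.exp (-1)) ^ 2)⁻¹
  have hr0 : Real.exp (-1) ≠ 0 := (Real.exp_pos _).ne'
  refine h3.congr fun n => ?_
  push_cast
  field_simp
  ring

lemma aux_exp_split_6 (x : ℝ) (n : ℕ) :
    Real.exp (-(x + n)) = Real.exp (-x) * Real.exp (-1) ^ n := by
  rw [← Real.exp_nat_mul, ← Real.exp_add]
  ring_nf

theorem stmt_6 (K : ℝ → ℝ) (hK0 : ∀ x, 0 ≤ K x)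
    (hmono : AntitoneOn K (Set.Ici 0))
    (M : Measure ℝ) (hM : IsProbabilityMeasure M) (hMsupp : M (Set.Iio 0) = 0)
    (hrep : ∀ x : ℝ, 0 ≤ x → K x = ∫ s in Set.Ioi x, 1 / s ∂M)
    (C x₀ : ℝ) (htail : ∀ x : ℝ, x₀ ≤ x → K x ≤ C * x * Real.exp (-x)) :
    (∀ k : ℕ, Integrable (fun s => s ^ k) M) ∧
      ∃ C' x₁ : ℝ, ∀ x : ℝ, x₁ ≤ x →
        (M (Set.Ioi x)).toReal ≤ C' * x ^ 2 * Real.exp (-x) := by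
  set a : ℝ := max x₀ 1 with ha_def
  have ha1 : (1 : ℝ) ≤ a := le_max_right _ _
  have hax0 : x₀ ≤ a := le_max_left _ _
  have ha0 : (0 : ℝ) < a := lt_of_lt_of_le one_pos ha1
  have hC : 0 ≤ C := by
    nlinarith [hK0 a, htail a hax0, mul_pos ha0 (Real.exp_pos (-a))]
  -- slice bound
  have hslice : ∀ x : ℝ, a ≤ x → ∀ y : ℝ, x ≤ y →
      M (Set.Ioc x y) ≤ ENNReal.ofReal (y * K x) := by
    intro x hx y hxy
    have hx0 : (0 : ℝ) < x := lt_of_lt_of_le ha0 hx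
    have hy0 : (0 : ℝ) < y := lt_of_lt_of_le hx0 hxy
    have hmeas : AEStronglyMeasurable (fun s : ℝ => 1 / s) (M.restrict (Set.Ioi x)) := by
      exact (measurable_const.div measurable_id).aestronglyMeasurable
    have hint : IntegrableOn (fun s : ℝ => 1 / s) (Set.Ioi x) M := by
      refine Integrable.mono' (integrable_const (1 / x)) hmeas ?_
      filter_upwards [ae_restrict_mem measurableSet_Ioi] with s hs
      have hs0 : (0 : ℝ) < s := lt_trans hx0 hs
      rw [Real.norm_eq_abs, abs_of_pos (by positivity)]
      exact one_div_le_one_div_of_le hx0 (le_of_lt hs)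
    have hK : K x = ∫ s in Set.Ioi x, 1 / s ∂M := hrep x hx0.le
    have h1 : (M (Set.Ioc x y)).toReal * (1 / y) ≤ ∫ s in Set.Ioc x y, 1 / s ∂M := by
      have hc : ∫ _ in Set.Ioc x y, (1 / y) ∂M = (M (Set.Ioc x y)).toReal * (1 / y) := by
        rw [setIntegral_const]; simp [smul_eq_mul, Measure.real]
      rw [← hc]
      refine setIntegral_mono_on ?_ (hint.mono_set Set.Ioc_subset_Ioi_self)
        measurableSet_Ioc ?_
      · exact integrableOn_const (measure_ne_top M _)
      · intro s hs
        exact one_div_le_one_div_of_le (lt_trans hx0 hs.1) hs.2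
    have h2 : ∫ s in Set.Ioc x y, 1 / s ∂M ≤ ∫ s in Set.Ioi x, 1 / s ∂M := by
      refine setIntegral_mono_set hint ?_ (HasSubset.Subset.eventuallyLE Set.Ioc_subset_Ioi_self)
      filter_upwards [ae_restrict_mem measurableSet_Ioi] with s hs
      have hs0 : (0 : ℝ) < s := lt_trans hx0 hs
      positivity
    have h3 : (M (Set.Ioc x y)).toReal ≤ y * K x := by
      have h4 := h1.trans (h2.trans_eq hK.symm)
      rw [mul_one_div, div_le_iff₀ hy0] at h4
      linarith
    rw [ENNReal.le_ofReal_iff_toReal_le (measure_ne_top M _)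
      (mul_nonneg hy0.le (hK0 x))]
    exact h3
  have hslice2 : ∀ x : ℝ, a ≤ x → ∀ n : ℕ,
      M (Set.Ioc (x + n) (x + n + 1)) ≤
      ENNReal.ofReal ((x + n + 1) * (C * (x + n) * Real.exp (-(x + n)))) := by
    intro x hx n
    have hn : (0 : ℝ) ≤ n := n.cast_nonneg
    have hxn : a ≤ x + n := le_trans hx (by linarith)
    refine (hslice (x + n) hxn (x + n + 1) (by linarith)).trans ?_
    refine ENNReal.ofReal_le_ofReal ?_
    have h5 := htail (x + n) (le_trans hax0 hxn)
    have h6 : (0 : ℝ) ≤ x + n + 1 := by linarith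
    exact mul_le_mul_of_nonneg_left h5 h6
  have hcover : ∀ x : ℝ, Set.Ioi x ⊆ ⋃ n : ℕ, Set.Ioc (x + n) (x + n + 1) := by
    intro x s hs
    simp only [Set.mem_iUnion, Set.mem_Ioc]
    have hsx : (0 : ℝ) < s - x := sub_pos.mpr hs
    have hm : 1 ≤ ⌈s - x⌉₊ := Nat.one_le_iff_ne_zero.mpr (Nat.ceil_pos.mpr hsx).ne'
    refine ⟨⌈s - x⌉₊ - 1, ?_, ?_⟩
    · have hcast : ((⌈s - x⌉₊ - 1 : ℕ) : ℝ) = (⌈s - x⌉₊ : ℝ) - 1 := by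
        push_cast [hm]; ring
      rw [hcast]
      have := Nat.ceil_lt_add_one hsx.le
      linarith
    · have hcast : ((⌈s - x⌉₊ - 1 : ℕ) : ℝ) = (⌈s - x⌉₊ : ℝ) - 1 := by
        push_cast [hm]; ring
      rw [hcast]
      have := Nat.le_ceil (s - x)
      linarith
  constructor
  · -- moments
    intro k
    refine ⟨(continuous_pow k).aestronglyMeasurable, ?_⟩
    rw [hasFiniteIntegral_iff_norm]
    set F : ℝ → ENNReal := fun s => ENNReal.ofReal ‖s ^ k‖ with hF_def
    have hsplit := lintegral_add_compl F (measurableSet_Iio (a := (0:ℝ))) (μ := M)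
    rw [compl_Iio] at hsplit
    rw [← hsplit, setLIntegral_measure_zero _ _ hMsupp, zero_add]
    have hsub : Set.Ici (0:ℝ) ⊆ Set.Icc 0 a ∪ Set.Ioi a := by
      intro s hs
      rcases le_or_gt s a with h | h
      · exact Or.inl ⟨hs, h⟩
      · exact Or.inr h
    refine lt_of_le_of_lt ((lintegral_mono_set hsub).trans (lintegral_union_le _ _ _)) ?_
    have hA : ∫⁻ s in Set.Icc 0 a, F s ∂M ≤ ENNReal.ofReal (a ^ k) := by
      have : ∫⁻ s in Set.Icc 0 a, F s ∂M ≤ ∫⁻ _ in Set.Icc 0 a, ENNReal.ofReal (a ^ k) ∂M := by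
        refine setLIntegral_mono measurable_const ?_
        intro s hs
        refine ENNReal.ofReal_le_ofReal ?_
        rw [Real.norm_eq_abs, abs_of_nonneg (pow_nonneg hs.1 k)]
        exact pow_le_pow_left₀ hs.1 hs.2 k
      refine this.trans ?_
      rw [setLIntegral_const]
      calc ENNReal.ofReal (a ^ k) * M (Set.Icc 0 a) ≤ ENNReal.ofReal (a ^ k) * 1 :=
            mul_le_mul_right prob_le_one _
        _ = ENNReal.ofReal (a ^ k) := mul_one _
    -- slice bounds on Ioi a
    set w : ℕ → ℝ := fun n => (a + n + 1) ^ k * ((a + n + 1) * (C * (a + n) * Real.exp (-(a + n)))) with hw_def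
    have hw_nonneg : ∀ n, 0 ≤ w n := by
      intro n
      have hn : (0 : ℝ) ≤ n := n.cast_nonneg
      have h1 : (0:ℝ) ≤ a + n + 1 := by linarith
      have h2 : (0:ℝ) ≤ a + n := by linarith
      exact mul_nonneg (pow_nonneg h1 k) (mul_nonneg h1
        (mul_nonneg (mul_nonneg hC h2) (Real.exp_pos _).le))
    have hw_le : ∀ n, w n ≤ (C * a ^ (k + 2) * Real.exp (-a)) *
        (((n : ℝ) + 2) ^ (k + 2) * Real.exp (-1) ^ n) := by
      intro n
      have hn : (0 : ℝ) ≤ n := n.cast_nonneg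
      have h1 : a + n + 1 ≤ a * ((n : ℝ) + 2) := by nlinarith
      have h2 : a + n ≤ a * ((n : ℝ) + 2) := by nlinarith
      have h1' : (0:ℝ) ≤ a + n + 1 := by linarith
      have h2' : (0:ℝ) ≤ a + n := by linarith
      have h3' : (0:ℝ) ≤ a * ((n : ℝ) + 2) := by nlinarith
      have hpow : (a + n + 1) ^ k ≤ (a * ((n : ℝ) + 2)) ^ k := pow_le_pow_left₀ h1' h1 k
      have key : (a + n + 1) ^ k * ((a + n + 1) * (a + n)) ≤
          (a * ((n : ℝ) + 2)) ^ k * ((a * ((n : ℝ) + 2)) * (a * ((n : ℝ) + 2))) := by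
        refine mul_le_mul hpow (mul_le_mul h1 h2 h2' h3') ?_ ?_
        · exact mul_nonneg h1' h2'
        · exact pow_nonneg h3' k
      have hexp := aux_exp_split_6 a n
      calc w n = (C * Real.exp (-a) * Real.exp (-1) ^ n) *
            ((a + n + 1) ^ k * ((a + n + 1) * (a + n))) := by
            rw [hw_def]; simp only []; rw [hexp]; ring
        _ ≤ (C * Real.exp (-a) * Real.exp (-1) ^ n) *
            ((a * ((n : ℝ) + 2)) ^ k * ((a * ((n : ℝ) + 2)) * (a * ((n : ℝ) + 2)))) := by
            refine mul_le_mul_of_nonneg_left key ?_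
            exact mul_nonneg (mul_nonneg hC (Real.exp_pos _).le) (pow_nonneg (Real.exp_pos _).le n)
        _ = (C * a ^ (k + 2) * Real.exp (-a)) *
            (((n : ℝ) + 2) ^ (k + 2) * Real.exp (-1) ^ n) := by
            rw [mul_pow]; ring
    have hw_sum : Summable w :=
      Summable.of_nonneg_of_le hw_nonneg hw_le
        ((aux_summable_6 (k + 2)).mul_left _)
    have hB : ∫⁻ s in Set.Ioi a, F s ∂M ≤ ENNReal.ofReal (∑' n, w n) := by
      refine ((lintegral_mono_set (hcover a)).trans (lintegral_iUnion_le _ _)).trans ?_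
      rw [ENNReal.ofReal_tsum_of_nonneg hw_nonneg hw_sum]
      refine ENNReal.tsum_le_tsum fun n => ?_
      have hn : (0 : ℝ) ≤ n := n.cast_nonneg
      have hstep : ∫⁻ s in Set.Ioc (a + n) (a + n + 1), F s ∂M ≤
          ENNReal.ofReal ((a + n + 1) ^ k) * M (Set.Ioc (a + n) (a + n + 1)) := by
        have : ∫⁻ s in Set.Ioc (a + n) (a + n + 1), F s ∂M ≤
            ∫⁻ _ in Set.Ioc (a + n) (a + n + 1), ENNReal.ofReal ((a + n + 1) ^ k) ∂M := by
          refine setLIntegral_mono measurable_const ?_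
          intro s hs
          refine ENNReal.ofReal_le_ofReal ?_
          have hs0 : (0:ℝ) ≤ s := le_of_lt (lt_of_le_of_lt (by linarith) hs.1)
          rw [Real.norm_eq_abs, abs_of_nonneg (pow_nonneg hs0 k)]
          exact pow_le_pow_left₀ hs0 hs.2 k
        rw [setLIntegral_const] at this
        exact this
      refine hstep.trans ?_
      calc ENNReal.ofReal ((a + n + 1) ^ k) * M (Set.Ioc (a + n) (a + n + 1)) ≤
            ENNReal.ofReal ((a + n + 1) ^ k) *
              ENNReal.ofReal ((a + n + 1) * (C * (a + n) * Real.exp (-(a + n)))) :=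
            mul_le_mul_right (hslice2 a le_rfl n) _
        _ = ENNReal.ofReal (w n) := by
            rw [← ENNReal.ofReal_mul (pow_nonneg (by linarith) k)]
    refine ENNReal.add_lt_top.mpr ⟨lt_of_le_of_lt hA ENNReal.ofReal_lt_top,
      lt_of_le_of_lt hB ENNReal.ofReal_lt_top⟩
  · -- tail bound
    set S : ℝ := ∑' n : ℕ, ((n : ℝ) + 2) ^ 2 * Real.exp (-1) ^ n with hS_def
    have hg : Summable (fun n : ℕ => ((n : ℝ) + 2) ^ 2 * Real.exp (-1) ^ n) := aux_summable_6 2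
    have hS0 : 0 ≤ S := tsum_nonneg fun n => by positivity
    refine ⟨C * S, a, fun x hx => ?_⟩
    have hx1 : (1 : ℝ) ≤ x := le_trans ha1 hx
    set u : ℕ → ℝ := fun n => (x + n + 1) * (C * (x + n) * Real.exp (-(x + n))) with hu_def
    have hu_nonneg : ∀ n, 0 ≤ u n := by
      intro n
      have hn : (0 : ℝ) ≤ n := n.cast_nonneg
      exact mul_nonneg (by linarith) (mul_nonneg (mul_nonneg hC (by linarith)) (Real.exp_pos _).le)
    have hu_le : ∀ n, u n ≤ (C * x ^ 2 * Real.exp (-x)) *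
        (((n : ℝ) + 2) ^ 2 * Real.exp (-1) ^ n) := by
      intro n
      have hn : (0 : ℝ) ≤ n := n.cast_nonneg
      have h1 : x + n + 1 ≤ x * ((n : ℝ) + 2) := by nlinarith
      have h2 : x + n ≤ x * ((n : ℝ) + 2) := by nlinarith
      have key : (x + n + 1) * (x + n) ≤ x ^ 2 * ((n : ℝ) + 2) ^ 2 := by nlinarith
      have hexp := aux_exp_split_6 x n
      calc u n = (C * Real.exp (-x) * Real.exp (-1) ^ n) * ((x + n + 1) * (x + n)) := by
            rw [hu_def]; simp only []; rw [hexp]; ring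
        _ ≤ (C * Real.exp (-x) * Real.exp (-1) ^ n) * (x ^ 2 * ((n : ℝ) + 2) ^ 2) := by
            refine mul_le_mul_of_nonneg_left key ?_
            exact mul_nonneg (mul_nonneg hC (Real.exp_pos _).le) (pow_nonneg (Real.exp_pos _).le n)
        _ = (C * x ^ 2 * Real.exp (-x)) * (((n : ℝ) + 2) ^ 2 * Real.exp (-1) ^ n) := by ring
    have hu_sum : Summable u :=
      Summable.of_nonneg_of_le hu_nonneg hu_le (hg.mul_left _)
    have hfinal : M (Set.Ioi x) ≤ ENNReal.ofReal (C * S * x ^ 2 * Real.exp (-x)) := by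
      calc M (Set.Ioi x) ≤ M (⋃ n : ℕ, Set.Ioc (x + n) (x + n + 1)) := measure_mono (hcover x)
        _ ≤ ∑' n : ℕ, M (Set.Ioc (x + n) (x + n + 1)) := measure_iUnion_le _
        _ ≤ ∑' n : ℕ, ENNReal.ofReal (u n) :=
            ENNReal.tsum_le_tsum fun n => hslice2 x (le_trans le_rfl hx) n
        _ = ENNReal.ofReal (∑' n, u n) := (ENNReal.ofReal_tsum_of_nonneg hu_nonneg hu_sum).symm
        _ ≤ ENNReal.ofReal (C * S * x ^ 2 * Real.exp (-x)) := by
            refine ENNReal.ofReal_le_ofReal ?_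
            have h7 := Summable.tsum_le_tsum hu_le hu_sum (hg.mul_left _)
            rw [tsum_mul_left] at h7
            refine h7.trans_eq ?_
            rw [hS_def]; ring
    refine ENNReal.toReal_le_of_le_ofReal ?_ hfinal
    have : (0:ℝ) ≤ x := by linarith
    positivity
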